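/- For the real Lie subalgebra 𝔥₀ = { it·Id + A : t ∈ ℝ, A ∈ 𝔰𝔩(2,ℝ) } of End_ℝ(ℂ²) (the Lie algebra of H = S¹·SL(2,ℝ) ⊂ GL(2,ℂ)), the space K(𝔥₀) has real dimension 9 (as an 𝔰𝔩(2,ℝ)-module it is isomorphic to V₄ ⊕ V₂ ⊕ V₀). -/

import Mathlib

set_option synthInstance.maxHeartbeats 1000000
set_option maxHeartbeats 4000000

open scoped Matrix

noncomputable section

/-- A 2×2 complex matrix, regarded as a real-linear endomorphism of `ℂ²`. -/
def toEndR : Matrix (Fin 2) (Fin 2) ℂ →ₗ[ℝ] Module.End ℝ (Fin 2 → ℂ) where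
  toFun M :=
    { toFun := M.mulVec
      map_add' := fun x y => Matrix.mulVec_add M x y
      map_smul' := fun c x => M.mulVec_smul c x }
  map_add' M N := LinearMap.ext fun v => Matrix.add_mulVec M N v
  map_smul' c M := LinearMap.ext fun v => Matrix.smul_mulVec c M v

lemma smul_fact (c t : ℝ) :
    ((((c * t : ℝ)) : ℂ) * Complex.I) • (1 : Matrix (Fin 2) (Fin 2) ℂ)
      = c • ((((t : ℝ) : ℂ) * Complex.I) • (1 : Matrix (Fin 2) (Fin 2) ℂ)) := by
  have h : (((c * t : ℝ)) : ℂ) * Complex.I = c • (((t : ℝ) : ℂ) * Complex.I) := by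
    rw [Complex.real_smul]
    push_cast
    ring
  rw [h, smul_assoc]

lemma map_ofReal_smul (c : ℝ) (A : Matrix (Fin 2) (Fin 2) ℝ) :
    (c • A).map (Complex.ofReal) = c • (A.map (Complex.ofReal)) := by
  ext i j
  simp [Matrix.map_apply, Complex.real_smul]

/-- The Lie algebra `𝔥₀` of `S¹ · SL(2,ℝ)` acting on `ℂ²`:
all endomorphisms of the form `i t · Id + A` with `t ∈ ℝ` and `A ∈ 𝔰𝔩(2,ℝ)`. -/
def h0 : Submodule ℝ (Module.End ℝ (Fin 2 → ℂ)) where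
  carrier := {E | ∃ (t : ℝ) (A : Matrix (Fin 2) (Fin 2) ℝ), A.trace = 0 ∧
    E = toEndR (((t : ℂ) * Complex.I) • (1 : Matrix (Fin 2) (Fin 2) ℂ)
        + A.map (Complex.ofReal))}
  zero_mem' := by
    refine ⟨0, 0, by simp, ?_⟩
    have h1 : (((0 : ℝ) : ℂ) * Complex.I) • (1 : Matrix (Fin 2) (Fin 2) ℂ)
        + (0 : Matrix (Fin 2) (Fin 2) ℝ).map (Complex.ofReal) = 0 := by
      have : (0 : Matrix (Fin 2) (Fin 2) ℝ).map (Complex.ofReal) = 0 := by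
        ext i j; simp
      rw [this]
      simp
    rw [h1, map_zero]
  add_mem' := by
    rintro E F ⟨t, A, hA, rfl⟩ ⟨s, B, hB, rfl⟩
    refine ⟨t + s, A + B, by simp [Matrix.trace_add, hA, hB], ?_⟩
    have hmap : (A + B).map (Complex.ofReal)
        = A.map (Complex.ofReal) + B.map (Complex.ofReal) := by
      ext i j; simp
    have hM : ((((t + s : ℝ)) : ℂ) * Complex.I) • (1 : Matrix (Fin 2) (Fin 2) ℂ)
        + (A + B).map (Complex.ofReal)
        = (((((t : ℝ)) : ℂ) * Complex.I) • (1 : Matrix (Fin 2) (Fin 2) ℂ)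
            + A.map (Complex.ofReal))
          + (((((s : ℝ)) : ℂ) * Complex.I) • (1 : Matrix (Fin 2) (Fin 2) ℂ)
            + B.map (Complex.ofReal)) := by
      rw [hmap]
      push_cast
      rw [add_mul, add_smul]
      abel
    rw [hM]
    exact (map_add toEndR _ _).symm
  smul_mem' := by
    rintro c E ⟨t, A, hA, rfl⟩
    refine ⟨c * t, c • A, by simp [Matrix.trace_smul, hA], ?_⟩
    rw [smul_fact, map_ofReal_smul, ← smul_add]
    exact (map_smul toEndR c _).symm


variable {m : Type*} [AddCommGroup m] [Module ℝ m]
/-- The curvature space `K(𝔥)`: alternating bilinear maps `R : 𝔪 × 𝔪 → 𝔥`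
satisfying the first Bianchi identity. -/
def Kspace (h : Submodule ℝ (Module.End ℝ m)) :
    Submodule ℝ (m →ₗ[ℝ] m →ₗ[ℝ] Module.End ℝ m) where
  carrier := {R | (∀ x, R x x = 0) ∧ (∀ x y, R x y ∈ h) ∧
    ∀ x y z, R x y z + R y z x + R z x y = 0}
  zero_mem' := ⟨fun _ => by simp, fun _ _ => h.zero_mem, fun _ _ _ => by simp⟩
  add_mem' := by
    rintro R S ⟨hR1, hR2, hR3⟩ ⟨hS1, hS2, hS3⟩
    refine ⟨fun x => ?_, fun x y => ?_, fun x y z => ?_⟩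
    · simp [hR1 x, hS1 x]
    · simpa using h.add_mem (hR2 x y) (hS2 x y)
    · have h3 : (R x y z + R y z x + R z x y) + (S x y z + S y z x + S z x y) = 0 := by
        rw [hR3 x y z, hS3 x y z, add_zero]
      simp only [LinearMap.add_apply]
      rw [← h3]; abel
  smul_mem' := by
    rintro c R ⟨hR1, hR2, hR3⟩
    refine ⟨fun x => ?_, fun x y => ?_, fun x y z => ?_⟩
    · simp [hR1 x]
    · simpa using h.smul_mem c (hR2 x y)
    · have h3 := hR3 x y z
      simp only [LinearMap.smul_apply]
      rw [← smul_add, ← smul_add, h3, smul_zero]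


noncomputable instance instKspaceAddCommGroup {m : Type*} [AddCommGroup m] [Module ℝ m]
    (h : Submodule ℝ (Module.End ℝ m)) :
    AddCommGroup ↥(Kspace h) :=
  @Submodule.addCommGroup ℝ _ _ LinearMap.addCommGroup _ (Kspace h)


namespace Kh0Aux

open Complex

/-- Real basis of `ℂ²` as a real vector space. -/
def uvec : Fin 4 → (Fin 2 → ℂ) := ![![1, 0], ![0, 1], ![Complex.I, 0], ![0, Complex.I]]

/-- Real coordinates. -/
def co (a : Fin 4) (x : Fin 2 → ℂ) : ℝ := ![(x 0).re, (x 1).re, (x 0).im, (x 1).im] a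

/-- Skew bilinear coefficient. -/
def cf (a b : Fin 4) (x y : Fin 2 → ℂ) : ℝ := co a x * co b y - co b x * co a y

/-- `Mk t α β γ = i t Id + [[α,β],[γ,-α]]`. -/
def Mk (t α β γ : ℝ) : Matrix (Fin 2) (Fin 2) ℂ :=
  !![(α : ℂ) + (t : ℂ) * Complex.I, (β : ℂ); (γ : ℂ), -(α : ℂ) + (t : ℂ) * Complex.I]

/-- The general curvature matrix. -/
def Smat (p : Fin 9 → ℝ) (x y : Fin 2 → ℂ) : Matrix (Fin 2) (Fin 2) ℂ :=
    cf 0 1 x y • Mk (p 5) (p 6) (p 7) (p 8)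
  + cf 0 2 x y • Mk (p 8) (-p 1) (-p 4) (p 0)
  + cf 0 3 x y • Mk (-p 6) (p 5 - p 4) (p 2) (p 1)
  + cf 1 2 x y • Mk (-p 6) (p 5 - p 4) (p 2) (p 1)
  + cf 1 3 x y • Mk (-p 7) (p 2) (p 3) (p 4)
  + cf 2 3 x y • Mk (p 5) (p 6) (p 7) (p 8)

lemma Smat_add_left (p : Fin 9 → ℝ) (x x' y : Fin 2 → ℂ) :
    Smat p (x + x') y = Smat p x y + Smat p x' y := by
  ext i j
  fin_cases i <;> fin_cases j <;>
    simp [Smat, cf, co, Mk, Matrix.add_apply, Matrix.smul_apply, Pi.add_apply,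
      Complex.add_re, Complex.add_im, Complex.real_smul] <;> ring

lemma Smat_smul_left (p : Fin 9 → ℝ) (c : ℝ) (x y : Fin 2 → ℂ) :
    Smat p (c • x) y = c • Smat p x y := by
  ext i j
  fin_cases i <;> fin_cases j <;>
    simp [Smat, cf, co, Mk, Matrix.add_apply, Matrix.smul_apply, Pi.smul_apply,
      Complex.real_smul, Complex.ofReal_mul] <;> ring

lemma Smat_add_right (p : Fin 9 → ℝ) (x y y' : Fin 2 → ℂ) :
    Smat p x (y + y') = Smat p x y + Smat p x y' := by
  ext i j
  fin_cases i <;> fin_cases j <;>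
    simp [Smat, cf, co, Mk, Matrix.add_apply, Matrix.smul_apply, Pi.add_apply,
      Complex.add_re, Complex.add_im, Complex.real_smul] <;> ring

lemma Smat_smul_right (p : Fin 9 → ℝ) (c : ℝ) (x y : Fin 2 → ℂ) :
    Smat p x (c • y) = c • Smat p x y := by
  ext i j
  fin_cases i <;> fin_cases j <;>
    simp [Smat, cf, co, Mk, Matrix.add_apply, Matrix.smul_apply, Pi.smul_apply,
      Complex.real_smul, Complex.ofReal_mul] <;> ring

/-- The parametrized family of curvature tensors, as a linear map. -/
def Phi : (Fin 9 → ℝ) →ₗ[ℝ]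
    ((Fin 2 → ℂ) →ₗ[ℝ] (Fin 2 → ℂ) →ₗ[ℝ] Module.End ℝ (Fin 2 → ℂ)) where
  toFun p := LinearMap.mk₂ ℝ (fun x y => toEndR (Smat p x y))
    (fun x x' y => by beta_reduce; rw [Smat_add_left, map_add])
    (fun c x y => by beta_reduce; rw [Smat_smul_left, map_smul])
    (fun x y y' => by beta_reduce; rw [Smat_add_right, map_add])
    (fun c x y => by beta_reduce; rw [Smat_smul_right, map_smul])
  map_add' p q := by
    refine LinearMap.ext fun x => LinearMap.ext fun y => ?_
    show toEndR (Smat (p + q) x y) = toEndR (Smat p x y) + toEndR (Smat q x y)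
    rw [← map_add]
    refine congrArg _ ?_
    ext i j
    fin_cases i <;> fin_cases j <;>
      simp [Smat, cf, co, Mk, Matrix.add_apply, Matrix.smul_apply, Pi.add_apply,
        Complex.real_smul, Complex.ofReal_add] <;> ring
  map_smul' c p := by
    refine LinearMap.ext fun x => LinearMap.ext fun y => ?_
    show toEndR (Smat (c • p) x y) = c • toEndR (Smat p x y)
    rw [← map_smul]
    refine congrArg _ ?_
    ext i j
    fin_cases i <;> fin_cases j <;>
      simp [Smat, cf, co, Mk, Matrix.add_apply, Matrix.smul_apply, Pi.smul_apply,
        Complex.real_smul, Complex.ofReal_mul, smul_eq_mul] <;> ring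

lemma toEndR_apply (M : Matrix (Fin 2) (Fin 2) ℂ) (v : Fin 2 → ℂ) :
    toEndR M v = M.mulVec v := rfl

lemma Phi_apply (p : Fin 9 → ℝ) (x y : Fin 2 → ℂ) :
    Phi p x y = toEndR (Smat p x y) := rfl

lemma Smat_alt (p : Fin 9 → ℝ) (x : Fin 2 → ℂ) : Smat p x x = 0 := by
  have hcf : ∀ a b : Fin 4, cf a b x x = 0 := by
    intro a b; simp [cf, mul_comm]
  ext i j
  simp [Smat, hcf]

lemma Phi_mem_h0 (p : Fin 9 → ℝ) (x y : Fin 2 → ℂ) : Phi p x y ∈ h0 := by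
  refine ⟨cf 0 1 x y * p 5 + cf 0 2 x y * p 8 + cf 0 3 x y * (-p 6)
      + cf 1 2 x y * (-p 6) + cf 1 3 x y * (-p 7) + cf 2 3 x y * p 5,
    !![cf 0 1 x y * p 6 + cf 0 2 x y * (-p 1) + cf 0 3 x y * (p 5 - p 4)
        + cf 1 2 x y * (p 5 - p 4) + cf 1 3 x y * p 2 + cf 2 3 x y * p 6,
       cf 0 1 x y * p 7 + cf 0 2 x y * (-p 4) + cf 0 3 x y * p 2
        + cf 1 2 x y * p 2 + cf 1 3 x y * p 3 + cf 2 3 x y * p 7;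
       cf 0 1 x y * p 8 + cf 0 2 x y * p 0 + cf 0 3 x y * p 1
        + cf 1 2 x y * p 1 + cf 1 3 x y * p 4 + cf 2 3 x y * p 8,
       -(cf 0 1 x y * p 6 + cf 0 2 x y * (-p 1) + cf 0 3 x y * (p 5 - p 4)
        + cf 1 2 x y * (p 5 - p 4) + cf 1 3 x y * p 2 + cf 2 3 x y * p 6)], ?_, ?_⟩
  · simp [Matrix.trace, Fin.sum_univ_two]
  · refine congrArg toEndR ?_
    ext i j
    fin_cases i <;> fin_cases j <;>
      simp [Smat, Mk, Matrix.add_apply, Matrix.smul_apply, Matrix.one_apply,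
        Matrix.map_apply, Complex.real_smul] <;> push_cast <;> ring

lemma Smat_bianchi (p : Fin 9 → ℝ) (x y z : Fin 2 → ℂ) :
    Smat p x y *ᵥ z + Smat p y z *ᵥ x + Smat p z x *ᵥ y = 0 := by
  funext i
  fin_cases i <;>
    · simp only [Pi.add_apply, Pi.zero_apply, Matrix.mulVec, dotProduct,
        Fin.sum_univ_two, Smat, Mk, cf, co, Matrix.add_apply, Matrix.smul_apply,
        Matrix.cons_val', Matrix.cons_val_zero, Matrix.cons_val_one, Matrix.head_cons,
        Matrix.head_fin_const, Matrix.empty_val', Matrix.cons_val_fin_one, Matrix.of_apply,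
        Matrix.cons_val_two, Matrix.cons_val_three, Matrix.tail_cons,
        Fin.zero_eta, Fin.mk_one, Complex.real_smul]
      rw [Complex.ext_iff]
      constructor <;>
        · simp only [Complex.add_re, Complex.add_im, Complex.mul_re, Complex.mul_im,
            Complex.sub_re, Complex.sub_im, Complex.neg_re, Complex.neg_im,
            Complex.ofReal_re, Complex.ofReal_im, Complex.I_re, Complex.I_im,
            Complex.zero_re, Complex.zero_im]
          ring

lemma Phi_mem_Kspace (p : Fin 9 → ℝ) : Phi p ∈ Kspace h0 := by
  refine ⟨fun x => ?_, fun x y => Phi_mem_h0 p x y, fun x y z => ?_⟩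
  · show toEndR (Smat p x x) = 0
    rw [Smat_alt, map_zero]
  · show toEndR (Smat p x y) z + toEndR (Smat p y z) x + toEndR (Smat p z x) y = 0
    exact Smat_bianchi p x y z

lemma Smat_01 (p : Fin 9 → ℝ) : Smat p (uvec 0) (uvec 1) = Mk (p 5) (p 6) (p 7) (p 8) := by
  ext i j
  fin_cases i <;> fin_cases j <;> simp [Smat, cf, co, uvec, Mk]

lemma Smat_02 (p : Fin 9 → ℝ) : Smat p (uvec 0) (uvec 2) = Mk (p 8) (-p 1) (-p 4) (p 0) := by
  ext i j
  fin_cases i <;> fin_cases j <;> simp [Smat, cf, co, uvec, Mk]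

lemma Smat_03 (p : Fin 9 → ℝ) : Smat p (uvec 0) (uvec 3) = Mk (-p 6) (p 5 - p 4) (p 2) (p 1) := by
  ext i j
  fin_cases i <;> fin_cases j <;> simp [Smat, cf, co, uvec, Mk]

lemma Smat_12 (p : Fin 9 → ℝ) : Smat p (uvec 1) (uvec 2) = Mk (-p 6) (p 5 - p 4) (p 2) (p 1) := by
  ext i j
  fin_cases i <;> fin_cases j <;> simp [Smat, cf, co, uvec, Mk]

lemma Smat_13 (p : Fin 9 → ℝ) : Smat p (uvec 1) (uvec 3) = Mk (-p 7) (p 2) (p 3) (p 4) := by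
  ext i j
  fin_cases i <;> fin_cases j <;> simp [Smat, cf, co, uvec, Mk]

lemma Smat_23 (p : Fin 9 → ℝ) : Smat p (uvec 2) (uvec 3) = Mk (p 5) (p 6) (p 7) (p 8) := by
  ext i j
  fin_cases i <;> fin_cases j <;> simp [Smat, cf, co, uvec, Mk]

lemma Smat_antisym (p : Fin 9 → ℝ) (x y : Fin 2 → ℂ) : Smat p y x = -Smat p x y := by
  ext i j
  fin_cases i <;> fin_cases j <;>
    simp [Smat, cf, co, Mk, Matrix.add_apply, Matrix.smul_apply, Matrix.neg_apply,
      Complex.real_smul] <;> ring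

lemma skw (B : (Fin 2 → ℂ) →ₗ[ℝ] (Fin 2 → ℂ) →ₗ[ℝ] Module.End ℝ (Fin 2 → ℂ))
    (hz : ∀ x, B x x = 0) (x y : Fin 2 → ℂ) : B y x = - B x y := by
  have h := hz (x + y)
  simp only [map_add, LinearMap.add_apply, hz x, hz y, zero_add, add_zero] at h
  exact eq_neg_of_add_eq_zero_left h

lemma decomp (x : Fin 2 → ℂ) :
    x = (x 0).re • uvec 0 + (x 1).re • uvec 1 + (x 0).im • uvec 2 + (x 1).im • uvec 3 := by
  funext i
  fin_cases i <;>
    simp [uvec, Complex.real_smul, Complex.ext_iff]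

lemma bilin_eq (B C : (Fin 2 → ℂ) →ₗ[ℝ] (Fin 2 → ℂ) →ₗ[ℝ] Module.End ℝ (Fin 2 → ℂ))
    (h : ∀ a b : Fin 4, B (uvec a) (uvec b) = C (uvec a) (uvec b)) : B = C := by
  refine LinearMap.ext fun x => LinearMap.ext fun y => ?_
  rw [decomp x, decomp y]
  simp only [map_add, map_smul, LinearMap.add_apply, LinearMap.smul_apply, h]

lemma phi_inj : Function.Injective (Phi : (Fin 9 → ℝ) →ₗ[ℝ] _) := by
  intro p q h
  have e : ∀ a b c : Fin 4, Smat p (uvec a) (uvec b) *ᵥ uvec c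
      = Smat q (uvec a) (uvec b) *ᵥ uvec c := by
    intro a b c
    rw [← toEndR_apply, ← Phi_apply, h]
    rfl
  have e1 := e 0 1 0
  have e2 := e 0 2 0
  have e3 := e 0 2 1
  have e4 := e 1 3 0
  have e5 := e 1 3 1
  rw [Smat_01 p, Smat_01 q] at e1
  rw [Smat_02 p, Smat_02 q] at e2
  rw [Smat_02 p, Smat_02 q] at e3
  rw [Smat_13 p, Smat_13 q] at e4
  rw [Smat_13 p, Smat_13 q] at e5
  simp [Mk, uvec, Matrix.mulVec, dotProduct, Fin.sum_univ_two, funext_iff,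
    Fin.forall_fin_two, Complex.ext_iff, Fin.ext_iff] at e1 e2 e3 e4 e5
  funext j
  fin_cases j
  · exact e2.2
  · exact e2.1.1
  · exact e4.1.1
  · exact e5.1
  · exact e3.1
  · exact e1.1.2
  · exact e1.1.1
  · exact e4.1.2
  · exact e1.2

lemma phi_surj (R : (Fin 2 → ℂ) →ₗ[ℝ] (Fin 2 → ℂ) →ₗ[ℝ] Module.End ℝ (Fin 2 → ℂ))
    (hR : R ∈ Kspace h0) : ∃ p : Fin 9 → ℝ, Phi p = R := by
  obtain ⟨hz, hmem, hb⟩ := hR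
  obtain ⟨t01, A01, tr01, h01⟩ := hmem (uvec 0) (uvec 1)
  obtain ⟨t02, A02, tr02, h02⟩ := hmem (uvec 0) (uvec 2)
  obtain ⟨t03, A03, tr03, h03⟩ := hmem (uvec 0) (uvec 3)
  obtain ⟨t12, A12, tr12, h12⟩ := hmem (uvec 1) (uvec 2)
  obtain ⟨t13, A13, tr13, h13⟩ := hmem (uvec 1) (uvec 3)
  obtain ⟨t23, A23, tr23, h23⟩ := hmem (uvec 2) (uvec 3)
  have hsk := skw R hz
  have w01 : A01 0 0 + A01 1 1 = 0 := by simpa [Matrix.trace, Fin.sum_univ_two] using tr01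
  have w02 : A02 0 0 + A02 1 1 = 0 := by simpa [Matrix.trace, Fin.sum_univ_two] using tr02
  have w03 : A03 0 0 + A03 1 1 = 0 := by simpa [Matrix.trace, Fin.sum_univ_two] using tr03
  have w12 : A12 0 0 + A12 1 1 = 0 := by simpa [Matrix.trace, Fin.sum_univ_two] using tr12
  have w13 : A13 0 0 + A13 1 1 = 0 := by simpa [Matrix.trace, Fin.sum_univ_two] using tr13
  have w23 : A23 0 0 + A23 1 1 = 0 := by simpa [Matrix.trace, Fin.sum_univ_two] using tr23
  have hB1 := hb (uvec 0) (uvec 1) (uvec 2)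
  have hB2 := hb (uvec 0) (uvec 1) (uvec 3)
  have hB3 := hb (uvec 0) (uvec 2) (uvec 3)
  have hB4 := hb (uvec 1) (uvec 2) (uvec 3)
  rw [h01, h12, hsk (uvec 0) (uvec 2), h02] at hB1
  rw [h01, h13, hsk (uvec 0) (uvec 3), h03] at hB2
  rw [h02, h23, hsk (uvec 0) (uvec 3), h03] at hB3
  rw [h12, h23, hsk (uvec 1) (uvec 3), h13] at hB4
  simp [Fin.ext_iff, LinearMap.neg_apply, toEndR_apply, Matrix.mulVec, dotProduct,
    Fin.sum_univ_two, Matrix.add_apply, Matrix.smul_apply, Matrix.one_apply,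
    Matrix.map_apply, uvec, Matrix.cons_val_zero, Matrix.cons_val_one, Matrix.head_cons,
    Matrix.cons_val_two, Matrix.cons_val_three, Matrix.tail_cons, Fin.zero_eta, Fin.mk_one,
    smul_eq_mul, funext_iff, Fin.forall_fin_two, Pi.add_apply, Pi.neg_apply, Pi.zero_apply,
    Complex.ext_iff, Complex.add_re, Complex.add_im, Complex.mul_re, Complex.mul_im,
    Complex.sub_re, Complex.sub_im, Complex.neg_re, Complex.neg_im, Complex.ofReal_re,
    Complex.ofReal_im, Complex.I_re, Complex.I_im, Complex.zero_re, Complex.zero_im,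
    Complex.one_re, Complex.one_im] at hB1 hB2 hB3 hB4
  obtain ⟨⟨b11, b12⟩, b13, b14⟩ := hB1
  obtain ⟨⟨b21, b22⟩, b23, b24⟩ := hB2
  obtain ⟨⟨b31, b32⟩, b33, b34⟩ := hB3
  obtain ⟨⟨b41, b42⟩, b43, b44⟩ := hB4
  refine ⟨![A02 1 0, A12 1 0, A13 0 0, A13 0 1, A13 1 0, t23, A23 0 0, A23 0 1, A23 1 0], ?_⟩
  set p : Fin 9 → ℝ := ![A02 1 0, A12 1 0, A13 0 0, A13 0 1, A13 1 0, t23, A23 0 0, A23 0 1, A23 1 0] with hpdef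
  have hp0 : p 0 = A02 1 0 := rfl
  have hp1 : p 1 = A12 1 0 := rfl
  have hp2 : p 2 = A13 0 0 := rfl
  have hp3 : p 3 = A13 0 1 := rfl
  have hp4 : p 4 = A13 1 0 := rfl
  have hp5 : p 5 = t23 := rfl
  have hp6 : p 6 = A23 0 0 := rfl
  have hp7 : p 7 = A23 0 1 := rfl
  have hp8 : p 8 = A23 1 0 := rfl
  have k01 : Phi p (uvec 0) (uvec 1) = R (uvec 0) (uvec 1) := by
    rw [h01, Phi_apply, Smat_01]
    refine congrArg toEndR ?_
    ext i j
    fin_cases i <;> fin_cases j <;>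
      simp [Mk, hp5, hp6, hp7, hp8, Matrix.add_apply, Matrix.smul_apply, Matrix.one_apply,
        Matrix.map_apply, Fin.ext_iff, Complex.ext_iff] <;>
      first | (constructor <;> linarith) | linarith
  have k02 : Phi p (uvec 0) (uvec 2) = R (uvec 0) (uvec 2) := by
    rw [h02, Phi_apply, Smat_02]
    refine congrArg toEndR ?_
    ext i j
    fin_cases i <;> fin_cases j <;>
      simp [Mk, hp8, hp1, hp4, hp0, Matrix.add_apply, Matrix.smul_apply, Matrix.one_apply,
        Matrix.map_apply, Fin.ext_iff, Complex.ext_iff] <;>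
      first | (constructor <;> linarith) | linarith
  have k03 : Phi p (uvec 0) (uvec 3) = R (uvec 0) (uvec 3) := by
    rw [h03, Phi_apply, Smat_03]
    refine congrArg toEndR ?_
    ext i j
    fin_cases i <;> fin_cases j <;>
      simp [Mk, hp6, hp5, hp4, hp2, hp1, Matrix.add_apply, Matrix.smul_apply, Matrix.one_apply,
        Matrix.map_apply, Fin.ext_iff, Complex.ext_iff] <;>
      first | (constructor <;> linarith) | linarith
  have k12 : Phi p (uvec 1) (uvec 2) = R (uvec 1) (uvec 2) := by
    rw [h12, Phi_apply, Smat_12]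
    refine congrArg toEndR ?_
    ext i j
    fin_cases i <;> fin_cases j <;>
      simp [Mk, hp6, hp5, hp4, hp2, hp1, Matrix.add_apply, Matrix.smul_apply, Matrix.one_apply,
        Matrix.map_apply, Fin.ext_iff, Complex.ext_iff] <;>
      first | (constructor <;> linarith) | linarith
  have k13 : Phi p (uvec 1) (uvec 3) = R (uvec 1) (uvec 3) := by
    rw [h13, Phi_apply, Smat_13]
    refine congrArg toEndR ?_
    ext i j
    fin_cases i <;> fin_cases j <;>
      simp [Mk, hp7, hp2, hp3, hp4, Matrix.add_apply, Matrix.smul_apply, Matrix.one_apply,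
        Matrix.map_apply, Fin.ext_iff, Complex.ext_iff] <;>
      first | (constructor <;> linarith) | linarith
  have k23 : Phi p (uvec 2) (uvec 3) = R (uvec 2) (uvec 3) := by
    rw [h23, Phi_apply, Smat_23]
    refine congrArg toEndR ?_
    ext i j
    fin_cases i <;> fin_cases j <;>
      simp [Mk, hp5, hp6, hp7, hp8, Matrix.add_apply, Matrix.smul_apply, Matrix.one_apply,
        Matrix.map_apply, Fin.ext_iff, Complex.ext_iff] <;>
      first | (constructor <;> linarith) | linarith
  have kdiag : ∀ a : Fin 4, Phi p (uvec a) (uvec a) = R (uvec a) (uvec a) := by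
    intro a
    rw [hz, Phi_apply, Smat_alt, map_zero]
  have klow : ∀ a b : Fin 4, Phi p (uvec a) (uvec b) = R (uvec a) (uvec b) →
      Phi p (uvec b) (uvec a) = R (uvec b) (uvec a) := by
    intro a b hab
    rw [Phi_apply, Smat_antisym, map_neg, ← Phi_apply, hab, hsk]
    exact neg_neg _
  refine bilin_eq _ _ fun a b => ?_
  fin_cases a <;> fin_cases b
  · exact kdiag 0
  · exact k01
  · exact k02
  · exact k03
  · exact klow 0 1 k01
  · exact kdiag 1
  · exact k12
  · exact k13
  · exact klow 0 2 k02
  · exact klow 1 2 k12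
  · exact kdiag 2
  · exact k23
  · exact klow 0 3 k03
  · exact klow 1 3 k13
  · exact klow 2 3 k23
  · exact kdiag 3

end Kh0Aux

/-- For the Lie algebra `𝔥₀` of `S¹·SL(2,ℝ) ⊂ GL(2,ℂ)`,
the curvature space `K(𝔥₀)` has real dimension `9`. -/
theorem finrank_Kspace_h0 : Module.finrank ℝ ↥(Kspace h0) = 9 := by
  have hrange : LinearMap.range (Kh0Aux.Phi : (Fin 9 → ℝ) →ₗ[ℝ] _) = Kspace h0 := by
    apply le_antisymm
    · rintro _ ⟨p, rfl⟩
      exact Kh0Aux.Phi_mem_Kspace p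
    · intro R hR
      obtain ⟨p, hp⟩ := Kh0Aux.phi_surj R hR
      exact ⟨p, hp⟩
  have e : (Fin 9 → ℝ) ≃ₗ[ℝ] ↥(Kspace h0) :=
    (LinearEquiv.ofInjective Kh0Aux.Phi Kh0Aux.phi_inj).trans (LinearEquiv.ofEq _ _ hrange)
  rw [← e.finrank_eq]
  exact Module.finrank_fin_fun ℝ

end
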